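/- arXiv:1902.10243 — 3 statements merged into one kernel-verified Lean document; each statement's English description precedes it below -/
import Mathlib

section
/- Let S be a set, X a metric space, φ : S → X a map, ℓ, ε ≥ 0, and f : S → ℝ a bounded function. If |f(s) - f(t)| ≤ ℓ·d(φ(s), φ(t)) + ε for all s, t ∈ S, then there exists a bounded ℓ-Lipschitz function F : X → ℝ such that ‖f - F ∘ φ‖_∞ ≤ ε. -/
/-- Lipschitz approximation lemma: if `f : S → ℝ` is bounded and
`|f s - f t| ≤ ℓ · d(φ s, φ t) + ε` for all `s, t`, then there is a bounded
`ℓ`-Lipschitz function `F : X → ℝ` with `‖f - F ∘ φ‖_∞ ≤ ε`. -/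
theorem lipschitz_approximation {S X : Type*} [MetricSpace X]
    (φ : S → X) (ℓ ε : ℝ) (hℓ : 0 ≤ ℓ) (hε : 0 ≤ ε)
    (f : S → ℝ) (hbdd : ∃ C : ℝ, ∀ s : S, |f s| ≤ C)
    (h : ∀ s t : S, |f s - f t| ≤ ℓ * dist (φ s) (φ t) + ε) :
    ∃ F : X → ℝ, LipschitzWith (Real.toNNReal ℓ) F ∧ (∃ C : ℝ, ∀ x : X, |F x| ≤ C) ∧
      ∀ s : S, |f s - F (φ s)| ≤ ε := by
  rcases isEmpty_or_nonempty S with hS | hS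
  · exact ⟨0, (LipschitzWith.const 0).weaken zero_le, ⟨0, fun x => by simp⟩,
      fun s => isEmptyElim s⟩
  obtain ⟨C, hC⟩ := hbdd
  have hC0 : 0 ≤ C := le_trans (abs_nonneg _) (hC hS.some)
  set G : X → ℝ := fun x => ⨆ t, f t - ℓ * dist x (φ t) with hG
  have hba : ∀ x : X, BddAbove (Set.range fun t => f t - ℓ * dist x (φ t)) := by
    intro x
    refine ⟨C, ?_⟩
    rintro _ ⟨t, rfl⟩
    show f t - ℓ * dist x (φ t) ≤ C
    have h1 := (abs_le.1 (hC t)).2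
    have h2 : 0 ≤ ℓ * dist x (φ t) := mul_nonneg hℓ dist_nonneg
    linarith
  have key : ∀ x y : X, G x ≤ G y + ℓ * dist x y := by
    intro x y
    refine ciSup_le fun t => ?_
    have h1 : f t - ℓ * dist y (φ t) ≤ G y := le_ciSup (hba y) t
    have h2 : dist y (φ t) ≤ dist x y + dist x (φ t) := by
      rw [dist_comm x y]; exact dist_triangle _ _ _
    have h3 := mul_le_mul_of_nonneg_left h2 hℓ
    show f t - ℓ * dist x (φ t) ≤ G y + ℓ * dist x y
    rw [mul_add] at h3
    linarith
  have hGlip : LipschitzWith (Real.toNNReal ℓ) G := by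
    refine LipschitzWith.of_dist_le_mul fun x y => ?_
    rw [Real.dist_eq, abs_sub_le_iff]
    have h1 := key x y
    have h2 := key y x
    rw [dist_comm y x] at h2
    constructor <;> [skip; skip] <;>
      simp only [Real.coe_toNNReal ℓ hℓ] <;> linarith
  have hGs : ∀ s : S, f s ≤ G (φ s) ∧ G (φ s) ≤ f s + ε := by
    intro s
    constructor
    · have := le_ciSup (hba (φ s)) s
      simpa using this
    · refine ciSup_le fun t => ?_
      have := (abs_le.1 (h t s)).2
      rw [dist_comm (φ t) (φ s)] at this
      linarith
  refine ⟨fun x => max (-C) (min (G x) C), ?_, ⟨C, ?_⟩, ?_⟩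
  · exact (hGlip.min_const C).const_max (-C)
  · intro x
    rw [abs_le]
    constructor
    · exact le_max_left _ _
    · exact max_le (by linarith) (min_le_right _ _)
  · intro s
    have h1 := (hGs s).1
    have h2 := (hGs s).2
    have hfs := abs_le.1 (hC s)
    have hmin : min (G (φ s)) C ≥ f s := le_min h1 hfs.2
    have hmax : max (-C) (min (G (φ s)) C) = min (G (φ s)) C :=
      max_eq_right (le_trans (by linarith [hfs.1]) hmin)
    show |f s - max (-C) (min (G (φ s)) C)| ≤ ε
    rw [hmax, abs_le]
    constructor
    · have : min (G (φ s)) C ≤ G (φ s) := min_le_left _ _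
      linarith
    · linarith
end

section
/- Let G be a topological group acting continuously by isometries on a metric space X, and let x ∈ X. Then the set L_x(G,X) = {g ↦ f(g⁻¹x) | f : X → ℝ 1-Lipschitz, |f| ≤ 1} is a norm-bounded, right-uniformly equicontinuous family of right-uniformly continuous bounded functions on G, is convex, right-translation closed, and compact in the topology of pointwise convergence. -/
/-- Let `G` be a topological group acting continuously by isometries on a metric space `X`
and let `x ∈ X`.  The set `L_x(G,X) = { g ↦ f(g⁻¹ • x) | f : X → ℝ 1-Lipschitz, |f| ≤ 1 }`
is norm-bounded, right-uniformly equicontinuous, convex, right-translation closed, and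
compact in the topology of pointwise convergence. -/
theorem Lx_UEB_convex_rightClosed_compact
    {G X : Type*} [Group G] [TopologicalSpace G] [IsTopologicalGroup G]
    [MetricSpace X] [MulAction G X]
    (hiso : ∀ (g : G) (y z : X), dist (g • y) (g • z) = dist y z)
    (hcont : Continuous fun p : G × X => p.1 • p.2) (x : X) :
    let L : Set (G → ℝ) := {h | ∃ f : X → ℝ, LipschitzWith 1 f ∧ (∀ y : X, |f y| ≤ 1) ∧
      h = fun g : G => f (g⁻¹ • x)}
    (∃ C : ℝ, ∀ h ∈ L, ∀ g : G, |h g| ≤ C) ∧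
    (∀ ε : ℝ, 0 < ε → ∃ U ∈ nhds (1 : G), ∀ h ∈ L, ∀ g g' : G,
      g * g'⁻¹ ∈ U → |h g - h g'| ≤ ε) ∧
    Convex ℝ L ∧
    (∀ h ∈ L, ∀ g : G, (fun g' : G => h (g' * g)) ∈ L) ∧
    IsCompact L := by
  intro L
  refine ⟨⟨1, ?_⟩, ?_, ?_, ?_, ?_⟩
  · -- bounded
    rintro h ⟨f, hlip, hbd, rfl⟩ g
    exact hbd _
  · -- equicontinuity
    intro ε hε
    refine ⟨{u : G | dist (u⁻¹ • x) x < ε}, ?_, ?_⟩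
    · have hc : Continuous fun u : G => dist (u⁻¹ • x) x :=
        (hcont.comp (continuous_inv.prodMk continuous_const)).dist continuous_const
      have : IsOpen {u : G | dist (u⁻¹ • x) x < ε} :=
        isOpen_lt hc continuous_const
      refine this.mem_nhds ?_
      simp [hε]
    · rintro h ⟨f, hlip, hbd, rfl⟩ g g' hU
      have hdist : dist (g⁻¹ • x) (g'⁻¹ • x) = dist ((g * g'⁻¹)⁻¹ • x) x := by
        rw [← hiso g', smul_smul, smul_smul, mul_inv_cancel, mul_inv_rev, inv_inv, one_smul]
      calc |f (g⁻¹ • x) - f (g'⁻¹ • x)| = dist (f (g⁻¹ • x)) (f (g'⁻¹ • x)) := by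
            rw [Real.dist_eq]
        _ ≤ 1 * dist (g⁻¹ • x) (g'⁻¹ • x) := hlip.dist_le_mul _ _
        _ = dist ((g * g'⁻¹)⁻¹ • x) x := by rw [one_mul, hdist]
        _ ≤ ε := le_of_lt hU
  · -- convex
    rintro h1 ⟨f1, hl1, hb1, rfl⟩ h2 ⟨f2, hl2, hb2, rfl⟩ a b ha hb hab
    refine ⟨fun y => a * f1 y + b * f2 y, ?_, ?_, ?_⟩
    · rw [lipschitzWith_iff_dist_le_mul]
      intro y z
      rw [Real.dist_eq, NNReal.coe_one, one_mul]
      have : a * f1 y + b * f2 y - (a * f1 z + b * f2 z)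
          = a * (f1 y - f1 z) + b * (f2 y - f2 z) := by ring
      rw [this]
      calc |a * (f1 y - f1 z) + b * (f2 y - f2 z)|
          ≤ |a * (f1 y - f1 z)| + |b * (f2 y - f2 z)| := abs_add_le _ _
        _ = a * |f1 y - f1 z| + b * |f2 y - f2 z| := by
            rw [abs_mul, abs_mul, abs_of_nonneg ha, abs_of_nonneg hb]
        _ ≤ a * dist y z + b * dist y z := by
            gcongr
            · rw [← Real.dist_eq]; simpa using hl1.dist_le_mul y z
            · rw [← Real.dist_eq]; simpa using hl2.dist_le_mul y z
        _ = dist y z := by rw [← add_mul, hab, one_mul]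
    · intro y
      calc |a * f1 y + b * f2 y| ≤ |a * f1 y| + |b * f2 y| := abs_add_le _ _
        _ = a * |f1 y| + b * |f2 y| := by
            rw [abs_mul, abs_mul, abs_of_nonneg ha, abs_of_nonneg hb]
        _ ≤ a * 1 + b * 1 := by gcongr; exacts [hb1 y, hb2 y]
        _ = 1 := by rw [mul_one, mul_one, hab]
    · funext g
      simp [smul_eq_mul]
  · -- right translation closed
    rintro h ⟨f, hlip, hbd, rfl⟩ g
    refine ⟨fun y => f (g⁻¹ • y), ?_, fun y => hbd _, ?_⟩
    · rw [lipschitzWith_iff_dist_le_mul]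
      intro y z
      rw [← hiso g⁻¹ y z]
      simpa using hlip.dist_le_mul (g⁻¹ • y) (g⁻¹ • z)
    · funext g'
      simp only []
      rw [mul_inv_rev, mul_smul]
  · -- compact
    have hKcl : IsClosed {f : X → ℝ | LipschitzWith 1 f ∧ ∀ y, |f y| ≤ 1} := by
      have h1 : {f : X → ℝ | LipschitzWith 1 f ∧ ∀ y, |f y| ≤ 1}
          = (⋂ (y : X) (z : X), {f : X → ℝ | dist (f y) (f z) ≤ dist y z})
            ∩ (⋂ (y : X), {f : X → ℝ | |f y| ≤ 1}) := by
        ext f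
        simp only [Set.mem_setOf_eq, Set.mem_inter_iff, Set.mem_iInter,
          lipschitzWith_iff_dist_le_mul, NNReal.coe_one, one_mul]
      rw [h1]
      refine IsClosed.inter ?_ ?_
      · exact isClosed_iInter fun y => isClosed_iInter fun z =>
          isClosed_le ((continuous_apply y).dist (continuous_apply z)) continuous_const
      · exact isClosed_iInter fun y =>
          isClosed_le (continuous_abs.comp (continuous_apply y)) continuous_const
    have hK : IsCompact {f : X → ℝ | LipschitzWith 1 f ∧ ∀ y, |f y| ≤ 1} := by
      refine (isCompact_univ_pi fun _ : X => isCompact_Icc (a := (-1 : ℝ)) (b := 1)).of_isClosed_subset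
        hKcl ?_
      intro f hf
      rw [Set.mem_univ_pi]
      intro y
      exact abs_le.mp (hf.2 y)
    have hL : L = (fun f : X → ℝ => fun g : G => f (g⁻¹ • x)) ''
        {f : X → ℝ | LipschitzWith 1 f ∧ ∀ y, |f y| ≤ 1} := by
      ext h
      constructor
      · rintro ⟨f, hlip, hbd, rfl⟩; exact ⟨f, ⟨hlip, hbd⟩, rfl⟩
      · rintro ⟨f, ⟨hlip, hbd⟩, rfl⟩; exact ⟨f, hlip, hbd, rfl⟩
    rw [hL]
    exact hK.image (continuous_pi fun g => continuous_apply (g⁻¹ • x))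
end

section
/- Let X be a metric space and G a topological subgroup of Iso(X) (with topology of pointwise convergence). Then the set L(G,X) = ⋃_{n∈ℕ} ⋃_{x∈Xⁿ} {g ↦ F(g⁻¹x) | F : Xⁿ → ℝ 1-Lipschitz with |F| ≤ 1} generates a dense linear subspace of RUCB(G), where Xⁿ carries the supremum metric. -/
/-- Right uniform continuity of a complex-valued function on a topological group. -/
def RUC {G : Type*} [Group G] [TopologicalSpace G] (f : G → ℂ) : Prop :=
  ∀ ε : ℝ, 0 < ε → ∃ U ∈ nhds (1 : G), ∀ x y : G, x * y⁻¹ ∈ U → ‖f x - f y‖ ≤ ε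

lemma nhds_extract {G X : Type*} [Group G] [ts : TopologicalSpace G] [MetricSpace X] [MulAction G X]
    (htop : ts = TopologicalSpace.induced (fun (g : G) (x : X) => g • x) Pi.topologicalSpace)
    {U : Set G} (hU : U ∈ nhds (1 : G)) :
    ∃ (n : ℕ) (x : Fin n → X) (δ : ℝ), 0 < δ ∧
      {g : G | ∀ i, dist (g • x i) (x i) < δ} ⊆ U := by
  subst htop
  rw [nhds_induced, nhds_pi, Filter.mem_comap] at hU
  obtain ⟨V, hV, hVU⟩ := hU
  rw [Filter.mem_pi] at hV
  obtain ⟨I, hIfin, t, ht, htV⟩ := hV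
  have ht' : ∀ y : X, y ∈ I → ∃ δ > 0, Metric.ball y δ ⊆ t y := by
    intro y _
    exact Metric.mem_nhds_iff.mp (by simpa using ht y)
  choose! δf hδf hball using ht'
  classical
  set s := hIfin.toFinset with hs
  set δ₀ : ℝ := min 1 (if h : s.Nonempty then s.inf' h δf else 1) with hδ₀
  have hδ₀pos : 0 < δ₀ := by
    refine lt_min one_pos ?_
    split_ifs with h
    · rw [Finset.lt_inf'_iff]
      intro b hb
      exact hδf b (hIfin.mem_toFinset.mp hb)
    · exact one_pos
  refine ⟨s.card, fun i => (s.equivFin.symm i : X), δ₀, hδ₀pos, ?_⟩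
  intro g hg
  apply hVU
  apply htV
  intro y hy
  have hys : y ∈ s := hIfin.mem_toFinset.mpr hy
  have hsn : s.Nonempty := ⟨y, hys⟩
  have : dist (g • y) y < δ₀ := by
    have := hg (s.equivFin ⟨y, hys⟩)
    simpa using this
  have hle : δ₀ ≤ δf y := by
    rw [hδ₀]
    refine le_trans (min_le_right _ _) ?_
    rw [dif_pos hsn]
    exact Finset.inf'_le _ hys
  exact hball y hy (Metric.mem_ball.mpr (lt_of_lt_of_le this hle))

lemma real_approx {α Y : Type*} [Nonempty α] [MetricSpace Y]
    (π : α → Y) (u : α → ℝ) (C δ ε : ℝ) (hC : 0 < C) (hδ : 0 < δ) (hε : 0 < ε)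
    (hbd : ∀ g, |u g| ≤ C)
    (hcont : ∀ g h, dist (π g) (π h) < δ → |u g - u h| ≤ ε) :
    ∃ (c : ℝ) (F : Y → ℝ), LipschitzWith 1 F ∧ (∀ y, |F y| ≤ 1) ∧
      ∀ g, |u g - c * F (π g)| ≤ ε := by
  classical
  set ℓ : ℝ := 2 * C / δ with hℓ
  have hℓpos : 0 < ℓ := by positivity
  set F₀ : Y → ℝ := fun y => ⨅ g, (u g + ℓ * dist y (π g)) with hF₀
  have hbdd : ∀ y : Y, BddBelow (Set.range fun g => u g + ℓ * dist y (π g)) := by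
    intro y
    refine ⟨-C, ?_⟩
    rintro _ ⟨g, rfl⟩
    show -C ≤ u g + ℓ * dist y (π g)
    have h1 : -C ≤ u g := neg_le_of_abs_le (hbd g)
    have h2 : 0 ≤ ℓ * dist y (π g) := by positivity
    linarith
  have h1 : ∀ h : α, F₀ (π h) ≤ u h := by
    intro h
    have := ciInf_le (hbdd (π h)) h
    simpa using this
  have h2 : ∀ y, -C ≤ F₀ y := by
    intro y
    refine le_ciInf fun g => ?_
    have h1' : -C ≤ u g := neg_le_of_abs_le (hbd g)
    have h2' : 0 ≤ ℓ * dist y (π g) := by positivity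
    linarith
  have h3 : ∀ h : α, u h - ε ≤ F₀ (π h) := by
    intro h
    refine le_ciInf fun g => ?_
    rcases lt_or_ge (dist (π g) (π h)) δ with hd | hd
    · have := hcont g h hd
      have h2' : 0 ≤ ℓ * dist (π h) (π g) := by positivity
      have := abs_le.mp this
      linarith [this.2]
    · have hℓδ : ℓ * δ = 2 * C := by rw [hℓ]; field_simp
      have : ℓ * δ ≤ ℓ * dist (π h) (π g) := by
        rw [dist_comm]
        exact mul_le_mul_of_nonneg_left hd hℓpos.le
      have hug : -C ≤ u g := neg_le_of_abs_le (hbd g)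
      have huh : u h ≤ C := le_of_abs_le (hbd h)
      linarith
  have h4 : ∀ y z, F₀ y ≤ F₀ z + ℓ * dist y z := by
    intro y z
    rw [← sub_le_iff_le_add]
    refine le_ciInf fun g => ?_
    have hy : F₀ y ≤ u g + ℓ * dist y (π g) := ciInf_le (hbdd y) g
    have htri : dist y (π g) ≤ dist y z + dist z (π g) := dist_triangle _ _ _
    nlinarith [hℓpos.le]
  set F₁ : Y → ℝ := fun y => min (F₀ y) C with hF₁
  have hF₁bd : ∀ y, |F₁ y| ≤ C := by
    intro y
    rw [abs_le]
    constructor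
    · exact le_min (h2 y) (by linarith)
    · exact min_le_right _ _
  have hF₁lip : ∀ y z, |F₁ y - F₁ z| ≤ ℓ * dist y z := by
    intro y z
    have key : ∀ a b : Y, F₁ a ≤ F₁ b + ℓ * dist a b := by
      intro a b
      have := h4 a b
      have : min (F₀ a) C ≤ min (F₀ b + ℓ * dist a b) (C + ℓ * dist a b) := by
        refine min_le_min this ?_
        have : 0 ≤ ℓ * dist a b := by positivity
        linarith
      rwa [min_add_add_right] at this
    rw [abs_sub_le_iff]
    constructor
    · have := key y z; linarith
    · have := key z y; rw [dist_comm] at this; linarith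
  have hF₁approx : ∀ h : α, |u h - F₁ (π h)| ≤ ε := by
    intro h
    have heq : F₁ (π h) = F₀ (π h) :=
      min_eq_left (le_trans (h1 h) (le_of_abs_le (hbd h)))
    rw [heq, abs_le]
    constructor
    · linarith [h1 h]
    · linarith [h3 h]
  set c : ℝ := max ℓ C with hc
  have hcpos : 0 < c := lt_max_of_lt_left hℓpos
  refine ⟨c, fun y => F₁ y / c, ?_, ?_, ?_⟩
  · apply LipschitzWith.of_dist_le_mul
    intro y z
    rw [Real.dist_eq, NNReal.coe_one, one_mul, div_sub_div_same, abs_div,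
      abs_of_pos hcpos, div_le_iff₀ hcpos]
    calc |F₁ y - F₁ z| ≤ ℓ * dist y z := hF₁lip y z
      _ ≤ dist y z * c := by
          rw [mul_comm]
          exact mul_le_mul_of_nonneg_left (le_max_left _ _) dist_nonneg
  · intro y
    rw [abs_div, abs_of_pos hcpos, div_le_one hcpos]
    exact le_trans (hF₁bd y) (le_max_right _ _)
  · intro g
    rw [mul_div_cancel₀ _ (ne_of_gt hcpos)]
    exact hF₁approx g

/-- Let `X` be a metric space and `G` a topological subgroup of `Iso(X)` with the topology
of pointwise convergence (formalized as: a group acting faithfully and isometrically on `X`,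
carrying the topology induced by the evaluation map into `X → X`).  Then the set
`L(G,X) = ⋃ₙ ⋃_{x ∈ Xⁿ} { g ↦ F(g⁻¹ • x) | F : Xⁿ → ℝ 1-Lipschitz, |F| ≤ 1 }` generates a
dense linear subspace of `RUCB(G)`: every right-uniformly continuous bounded `f : G → ℂ`
can be uniformly approximated by elements of the linear span of `L(G,X)`. -/
theorem span_Lipschitz_dense_in_RUCB
    {G X : Type*} [Group G] [TopologicalSpace G] [MetricSpace X] [MulAction G X]
    (hiso : ∀ (g : G) (y z : X), dist (g • y) (g • z) = dist y z)
    (hinj : Function.Injective fun (g : G) (x : X) => g • x)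
    (htop : ‹TopologicalSpace G› =
      TopologicalSpace.induced (fun (g : G) (x : X) => g • x) Pi.topologicalSpace) :
    let L : Set (G → ℂ) := {h | ∃ (n : ℕ) (x : Fin n → X) (F : (Fin n → X) → ℝ),
      LipschitzWith 1 F ∧ (∀ y : Fin n → X, |F y| ≤ 1) ∧
      h = fun g : G => ((F fun i => g⁻¹ • x i : ℝ) : ℂ)}
    ∀ f : G → ℂ, (∃ C : ℝ, ∀ g : G, ‖f g‖ ≤ C) → RUC f →
      ∀ ε : ℝ, 0 < ε → ∃ h ∈ Submodule.span ℂ L, ∀ g : G, ‖f g - h g‖ ≤ ε := by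
  intro L f ⟨C₀, hC₀⟩ hruc ε hε
  haveI : Nonempty G := ⟨1⟩
  set C : ℝ := max C₀ 1 with hCdef
  have hCpos : 0 < C := lt_max_of_lt_right one_pos
  have hbd : ∀ g, ‖f g‖ ≤ C := fun g => le_trans (hC₀ g) (le_max_left _ _)
  obtain ⟨U, hU, hUf⟩ := hruc (ε / 2) (by positivity)
  obtain ⟨n, x, δ, hδ, hsub⟩ := nhds_extract htop hU
  set π : G → (Fin n → X) := fun g i => g⁻¹ • x i with hπ
  -- key continuity estimate
  have key : ∀ g h : G, dist (π g) (π h) < δ → ‖f g - f h‖ ≤ ε / 2 := by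
    intro g h hd
    apply hUf
    apply hsub
    intro i
    have heq : (g * h⁻¹) • x i = g • (h⁻¹ • x i) := mul_smul g h⁻¹ (x i)
    have heq2 : x i = g • (g⁻¹ • x i) := by rw [smul_inv_smul]
    calc dist ((g * h⁻¹) • x i) (x i)
        = dist (g • (h⁻¹ • x i)) (g • (g⁻¹ • x i)) := by rw [heq, ← heq2]
      _ = dist (h⁻¹ • x i) (g⁻¹ • x i) := hiso g _ _
      _ = dist (π h i) (π g i) := rfl
      _ ≤ dist (π h) (π g) := dist_le_pi_dist _ _ i
      _ < δ := by rwa [dist_comm]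
  -- real and imaginary parts
  have hre : ∀ g h : G, dist (π g) (π h) < δ → |(f g).re - (f h).re| ≤ ε / 2 := by
    intro g h hd
    calc |(f g).re - (f h).re| = |(f g - f h).re| := by rw [Complex.sub_re]
      _ ≤ ‖f g - f h‖ := Complex.abs_re_le_norm _
      _ ≤ ε / 2 := key g h hd
  have him : ∀ g h : G, dist (π g) (π h) < δ → |(f g).im - (f h).im| ≤ ε / 2 := by
    intro g h hd
    calc |(f g).im - (f h).im| = |(f g - f h).im| := by rw [Complex.sub_im]
      _ ≤ ‖f g - f h‖ := Complex.abs_im_le_norm _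
      _ ≤ ε / 2 := key g h hd
  obtain ⟨c₁, F₁, hF₁lip, hF₁bd, hF₁⟩ :=
    real_approx π (fun g => (f g).re) C δ (ε / 2) hCpos hδ (by positivity)
      (fun g => le_trans (Complex.abs_re_le_norm _) (hbd g)) hre
  obtain ⟨c₂, F₂, hF₂lip, hF₂bd, hF₂⟩ :=
    real_approx π (fun g => (f g).im) C δ (ε / 2) hCpos hδ (by positivity)
      (fun g => le_trans (Complex.abs_im_le_norm _) (hbd g)) him
  set h₁ : G → ℂ := fun g => ((F₁ (π g) : ℝ) : ℂ) with hh₁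
  set h₂ : G → ℂ := fun g => ((F₂ (π g) : ℝ) : ℂ) with hh₂
  have h₁mem : h₁ ∈ L := ⟨n, x, F₁, hF₁lip, hF₁bd, rfl⟩
  have h₂mem : h₂ ∈ L := ⟨n, x, F₂, hF₂lip, hF₂bd, rfl⟩
  refine ⟨(c₁ : ℂ) • h₁ + ((c₂ : ℂ) * Complex.I) • h₂, ?_, ?_⟩
  · exact Submodule.add_mem _
      (Submodule.smul_mem _ _ (Submodule.subset_span h₁mem))
      (Submodule.smul_mem _ _ (Submodule.subset_span h₂mem))
  · intro g
    have h1 := hF₁ g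
    have h2 := hF₂ g
    set z : ℂ := f g - ((c₁ : ℂ) • h₁ + ((c₂ : ℂ) * Complex.I) • h₂) g with hz
    have hzre : z.re = (f g).re - c₁ * F₁ (π g) := by
      simp [hz, hh₁, hh₂, Complex.sub_re, Complex.add_re, Complex.mul_re]
    have hzim : z.im = (f g).im - c₂ * F₂ (π g) := by
      simp [hz, hh₁, hh₂, Complex.sub_im, Complex.add_im, Complex.mul_im]
    calc ‖z‖ ≤ |z.re| + |z.im| := Complex.norm_le_abs_re_add_abs_im z
      _ ≤ ε / 2 + ε / 2 := by rw [hzre, hzim]; exact add_le_add h1 h2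
      _ = ε := by ring
end
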